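/- The translation map F12 transports the joint image–style distribution of domain 1 onto that of domain 2: assume E1c (G1 (c, s1)) = c and E1s (G1 (c, s1)) = s1 for all (c, s1) ∈ C × S1. Then Measure.map F12 (p1.prod q2) = p2.prod q1 as probability measures on X2 × S1, where F12 (x1, s2) = (G2 (E1c x1, s2), E1s x1). -/

import Mathlib

open MeasureTheory

/-- The translation map `F12` transports the joint image–style distribution of
domain 1 onto that of domain 2. -/
theorem translation_map_transports_joint_distribution
    {X1 X2 C S1 S2 : Type*}
    [MeasurableSpace X1] [MeasurableSpace X2] [MeasurableSpace C]
    [MeasurableSpace S1] [MeasurableSpace S2]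
    (E1c : X1 → C) (E2c : X2 → C) (E1s : X1 → S1) (E2s : X2 → S2)
    (G1 : C × S1 → X1) (G2 : C × S2 → X2)
    (hE1c : Measurable E1c) (hE2c : Measurable E2c)
    (hE1s : Measurable E1s) (hE2s : Measurable E2s)
    (hG1 : Measurable G1) (hG2 : Measurable G2)
    (pc : Measure C) (q1 : Measure S1) (q2 : Measure S2)
    [IsProbabilityMeasure pc] [IsProbabilityMeasure q1] [IsProbabilityMeasure q2]
    (hc1 : ∀ (c : C) (s1 : S1), E1c (G1 (c, s1)) = c)
    (hs1 : ∀ (c : C) (s1 : S1), E1s (G1 (c, s1)) = s1) :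
    Measure.map (fun p : X1 × S2 => (G2 (E1c p.1, p.2), E1s p.1))
      ((Measure.map G1 (pc.prod q1)).prod q2)
      = (Measure.map G2 (pc.prod q2)).prod q1 := by
  -- rearrangement map
  have he : MeasurePreserving (fun p : (C × S1) × S2 => ((p.1.1, p.2), p.1.2))
      ((pc.prod q1).prod q2) ((pc.prod q2).prod q1) := by
    have h := (((measurePreserving_prodAssoc pc q2 q1).symm
        MeasurableEquiv.prodAssoc).comp
          (((MeasurePreserving.id pc).prod Measure.measurePreserving_swap).comp
            (measurePreserving_prodAssoc pc q1 q2)))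
    exact h
  have h1 : (Measure.map G1 (pc.prod q1)).prod q2
      = Measure.map (Prod.map G1 id) ((pc.prod q1).prod q2) := by
    rw [← Measure.map_prod_map _ _ hG1 measurable_id, Measure.map_id]
  rw [h1, Measure.map_map (by fun_prop) (hG1.prodMap measurable_id)]
  have hfun : (fun p : X1 × S2 => (G2 (E1c p.1, p.2), E1s p.1)) ∘ Prod.map G1 id
      = (Prod.map G2 id) ∘ (fun p : (C × S1) × S2 => ((p.1.1, p.2), p.1.2)) := by
    funext ⟨⟨c, s1⟩, s2⟩
    simp [hc1, hs1, Prod.map]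
  rw [hfun, ← Measure.map_map (hG2.prodMap measurable_id) he.measurable, he.map_eq,
    ← Measure.map_prod_map _ _ hG2 measurable_id, Measure.map_id]
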